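/- The standard numbering n ↦ φ_n of the unary partial computable functions is complete, with the totally undefined function as special element: for every partial computable function ψ : ℕ ⇀ ℕ there exists a total computable function f : ℕ → ℕ such that for every n, if ψ(n) is defined then φ_{f(n)} = φ_{ψ(n)}, and if ψ(n) is undefined then φ_{f(n)} is the nowhere-defined partial function. -/

import Mathlib

/-- The `n`-th unary partial computable function, in the standard numbering via codes. -/
def phi (n : ℕ) : ℕ →. ℕ := (Denumerable.ofNat Nat.Partrec.Code n).eval

/-- The standard numbering `n ↦ φ_n` of the unary partial computable functions is
complete, with the nowhere-defined function as special element. -/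
theorem phi_complete (ψ : ℕ →. ℕ) (hψ : Nat.Partrec ψ) :
    ∃ f : ℕ → ℕ, Computable f ∧ ∀ n : ℕ,
      (∀ y ∈ ψ n, phi (f n) = phi y) ∧
      (¬ (ψ n).Dom → phi (f n) = fun _ => Part.none) := by
  obtain ⟨s, hs, hs_eval⟩ := Nat.Partrec.Code.smn
  have hG : Nat.Partrec (fun p : ℕ =>
      (ψ p.unpair.1).bind fun y => phi y p.unpair.2) := by
    refine Partrec.nat_iff.mp ?_
    refine Partrec.bind ?_ ?_
    · exact (Partrec.nat_iff.mpr hψ).comp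
        (Computable.fst.comp Computable.unpair)
    · exact Nat.Partrec.Code.eval_part.comp
        ((Computable.ofNat _).comp Computable.snd)
        ((Computable.snd.comp Computable.unpair).comp Computable.fst)
  obtain ⟨c, hc⟩ := Nat.Partrec.Code.exists_code.mp hG
  refine ⟨fun n => Encodable.encode (s c n), ?_, ?_⟩
  · exact Computable.encode.comp (hs.comp (Computable.const c) Computable.id)
  · intro n
    have key : ∀ x, phi (Encodable.encode (s c n)) x
        = (ψ n).bind fun y => phi y x := by
      intro x
      have := hs_eval c n x
      simp only [phi, Denumerable.ofNat_encode, this, hc, Nat.unpair_pair]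
    constructor
    · intro y hy
      funext x
      rw [key x, Part.eq_some_iff.mpr hy, Part.bind_some]
    · intro h
      funext x
      rw [key x]
      apply Part.eq_none_iff'.mpr
      intro hd
      obtain ⟨a, ha⟩ := Part.dom_iff_mem.mp hd
      obtain ⟨y, hy, -⟩ := Part.mem_bind_iff.mp ha
      exact h (Part.dom_iff_mem.mpr ⟨y, hy⟩)
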